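/- For any probability measure P with μ(Z) ≥ 0 P-almost surely and E[(μ(Z))_+] < ∞, the set of minimizers of η ↦ (1/α) E[(μ(Z) − η)_+] + η over ℝ is exactly the closed interval [q_{1−α}, q_{1−α,+}], where q_{1−α} = inf{t : P(μ(Z) ≤ t) ≥ 1−α} is the (1−α)-quantile and q_{1−α,+} = inf{t : P(μ(Z) ≤ t) > 1−α} is the upper (1−α)-quantile. -/

import Mathlib

open MeasureTheory

namespace CVarAux


variable {Z : Type*} [MeasurableSpace Z] {P : Measure Z} [IsProbabilityMeasure P]
variable {μ : Z → ℝ}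

lemma int_aux (hμ : Measurable μ) (hint : Integrable (fun z => max (μ z) 0) P) (η : ℝ) :
    Integrable (fun z => max (μ z - η) 0) P := by
  apply Integrable.mono' (hint.add (integrable_const |η|))
  · exact ((hμ.sub measurable_const).max measurable_const).aestronglyMeasurable
  · filter_upwards with z
    simp only [Pi.add_apply]
    rw [Real.norm_eq_abs, abs_of_nonneg (le_max_right _ _)]
    rcases le_total (μ z) η with h | h
    · rw [max_eq_right (by linarith : μ z - η ≤ 0)]
      have h1 := le_max_right (μ z) 0
      have h2 := abs_nonneg η
      linarith
    · rw [max_eq_left (by linarith : (0:ℝ) ≤ μ z - η)]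
      have h1 := le_max_left (μ z) 0
      have h2 := neg_abs_le η
      linarith

lemma gdiff_lower (hμ : Measurable μ) (hint : Integrable (fun z => max (μ z) 0) P)
    {a b : ℝ} (hab : a ≤ b) :
    (b - a) * (P {z | b ≤ μ z}).toReal ≤
      (∫ z, max (μ z - a) 0 ∂P) - ∫ z, max (μ z - b) 0 ∂P := by
  have hs : MeasurableSet {z | b ≤ μ z} := measurableSet_le measurable_const hμ
  rw [← integral_sub (int_aux hμ hint a) (int_aux hμ hint b)]
  have hind : ∫ z, Set.indicator {z | b ≤ μ z} (fun _ => b - a) z ∂P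
      = (P {z | b ≤ μ z}).toReal • (b - a) := integral_indicator_const _ hs
  rw [show (b - a) * (P {z | b ≤ μ z}).toReal = (P {z | b ≤ μ z}).toReal • (b - a) by
    rw [smul_eq_mul]; ring, ← hind]
  apply integral_mono ((integrable_const (b - a)).indicator hs)
    ((int_aux hμ hint a).sub (int_aux hμ hint b))
  intro z
  simp only [Pi.sub_apply]
  by_cases h : b ≤ μ z
  · rw [Set.indicator_of_mem (show z ∈ {z | b ≤ μ z} from h), max_eq_left (by linarith : (0:ℝ) ≤ μ z - a),
      max_eq_left (by linarith : (0:ℝ) ≤ μ z - b)]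
    simp
  · push_neg at h
    rw [Set.indicator_of_notMem (show z ∉ {z | b ≤ μ z} from by simpa using h.not_ge),
      max_eq_right (by linarith : μ z - b ≤ 0)]
    simp only [sub_zero]
    exact le_max_right _ _

lemma gdiff_upper (hμ : Measurable μ) (hint : Integrable (fun z => max (μ z) 0) P)
    {a b : ℝ} (hab : a ≤ b) :
    (∫ z, max (μ z - a) 0 ∂P) - ∫ z, max (μ z - b) 0 ∂P ≤
      (b - a) * (P {z | a < μ z}).toReal := by
  have hs : MeasurableSet {z | a < μ z} := measurableSet_lt measurable_const hμ
  rw [← integral_sub (int_aux hμ hint a) (int_aux hμ hint b)]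
  have hind : ∫ z, Set.indicator {z | a < μ z} (fun _ => b - a) z ∂P
      = (P {z | a < μ z}).toReal • (b - a) := integral_indicator_const _ hs
  rw [show (b - a) * (P {z | a < μ z}).toReal = (P {z | a < μ z}).toReal • (b - a) by
    rw [smul_eq_mul]; ring, ← hind]
  apply integral_mono ((int_aux hμ hint a).sub (int_aux hμ hint b))
    ((integrable_const (b - a)).indicator hs)
  intro z
  simp only [Pi.sub_apply]
  by_cases h : a < μ z
  · rw [Set.indicator_of_mem (show z ∈ {z | a < μ z} from h), max_eq_left (by linarith : (0:ℝ) ≤ μ z - a)]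
    have h1 := le_max_left (μ z - b) 0
    have h2 := le_max_right (μ z - b) 0
    linarith
  · push_neg at h
    rw [Set.indicator_of_notMem (show z ∉ {z | a < μ z} from by simpa using h.not_gt),
      max_eq_right (by linarith : μ z - a ≤ 0),
      max_eq_right (by linarith : μ z - b ≤ 0)]
    simp

lemma toReal_compl_aux (hμ : Measurable μ) {s : Set Z} (hs : MeasurableSet s) :
    (P s).toReal + (P sᶜ).toReal = 1 := by
  have h := measure_add_measure_compl (μ := P) hs
  rw [measure_univ] at h
  have := congrArg ENNReal.toReal h
  rwa [ENNReal.toReal_add (measure_ne_top _ _) (measure_ne_top _ _), ENNReal.toReal_one] at this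

lemma compl1 (hμ : Measurable μ) {α : ℝ} (hα : α ∈ Set.Ioo (0:ℝ) 1) (η : ℝ) :
    P {z | η < μ z} ≤ ENNReal.ofReal α ↔ ENNReal.ofReal (1 - α) ≤ P {z | μ z ≤ η} := by
  have hs : MeasurableSet {z | μ z ≤ η} := measurableSet_le hμ measurable_const
  have hc : {z | μ z ≤ η}ᶜ = {z | η < μ z} := by ext z; simp
  have hsum := toReal_compl_aux hμ hs (P := P)
  rw [hc] at hsum
  rw [ENNReal.le_ofReal_iff_toReal_le (measure_ne_top _ _) hα.1.le,
    ENNReal.ofReal_le_iff_le_toReal (measure_ne_top _ _)]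
  constructor <;> intro h <;> linarith

lemma compl2 (hμ : Measurable μ) {α : ℝ} (hα : α ∈ Set.Ioo (0:ℝ) 1) (η : ℝ) :
    ENNReal.ofReal α ≤ P {z | η ≤ μ z} ↔ P {z | μ z < η} ≤ ENNReal.ofReal (1 - α) := by
  have hs : MeasurableSet {z | η ≤ μ z} := measurableSet_le measurable_const hμ
  have hc : {z | η ≤ μ z}ᶜ = {z | μ z < η} := by ext z; simp
  have hsum := toReal_compl_aux hμ hs (P := P)
  rw [hc] at hsum
  rw [ENNReal.le_ofReal_iff_toReal_le (measure_ne_top _ _) (by linarith [hα.2] : (0:ℝ) ≤ 1 - α),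
    ENNReal.ofReal_le_iff_le_toReal (measure_ne_top _ _)]
  constructor <;> intro h <;> linarith

/-- limit from the right: {μ > η} = ⋃ₙ {μ ≥ η + 1/(n+1)} -/
lemma limit_right (hμ : Measurable μ) {η : ℝ} {c : ENNReal}
    (h : ∀ n : ℕ, P {z | η + 1 / (n + 1) ≤ μ z} ≤ c) :
    P {z | η < μ z} ≤ c := by
  have hu : {z | η < μ z} = ⋃ n : ℕ, {z | η + 1 / (n + 1) ≤ μ z} := by
    ext z
    simp only [Set.mem_setOf_eq, Set.mem_iUnion]
    constructor
    · intro hz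
      obtain ⟨n, hn⟩ := exists_nat_one_div_lt (sub_pos.mpr hz)
      exact ⟨n, by linarith⟩
    · rintro ⟨n, hn⟩
      have : (0:ℝ) < 1 / (n + 1) := by positivity
      linarith
  have hmono : Monotone (fun n : ℕ => {z | η + 1 / (n + 1) ≤ μ z}) := by
    intro m n hmn z hz
    simp only [Set.mem_setOf_eq] at hz ⊢
    have h1 : (1:ℝ) / (n + 1) ≤ 1 / (m + 1) := by
      apply one_div_le_one_div_of_le (by positivity)
      have : (m:ℝ) ≤ n := Nat.cast_le.mpr hmn
      linarith
    linarith
  rw [hu, hmono.directed_le.measure_iUnion]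
  exact iSup_le h

/-- limit from the left (intersection): {μ ≥ η} = ⋂ₙ {μ > η - 1/(n+1)} -/
lemma limit_left (hμ : Measurable μ) {η : ℝ} {c : ENNReal}
    (h : ∀ n : ℕ, c ≤ P {z | η - 1 / (n + 1) < μ z}) :
    c ≤ P {z | η ≤ μ z} := by
  have hu : {z | η ≤ μ z} = ⋂ n : ℕ, {z | η - 1 / (n + 1) < μ z} := by
    ext z
    simp only [Set.mem_setOf_eq, Set.mem_iInter]
    constructor
    · intro hz n
      have : (0:ℝ) < 1 / (n + 1) := by positivity
      linarith
    · intro hz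
      by_contra hcon
      push_neg at hcon
      obtain ⟨n, hn⟩ := exists_nat_one_div_lt (sub_pos.mpr hcon)
      have := hz n
      linarith
  have hanti : Antitone (fun n : ℕ => {z | η - 1 / (n + 1) < μ z}) := by
    intro m n hmn z hz
    simp only [Set.mem_setOf_eq] at hz ⊢
    have h1 : (1:ℝ) / (n + 1) ≤ 1 / (m + 1) := by
      apply one_div_le_one_div_of_le (by positivity)
      have : (m:ℝ) ≤ n := Nat.cast_le.mpr hmn
      linarith
    linarith
  rw [hu, hanti.directed_ge.measure_iInter
    (fun n => (measurableSet_lt measurable_const hμ).nullMeasurableSet)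
    ⟨0, measure_ne_top _ _⟩]
  exact le_iInf h

/-- {μ < η} = ⋃ₙ {μ ≤ η - 1/(n+1)} -/
lemma limit_lt (hμ : Measurable μ) {η : ℝ} {c : ENNReal}
    (h : ∀ n : ℕ, P {z | μ z ≤ η - 1 / (n + 1)} ≤ c) :
    P {z | μ z < η} ≤ c := by
  have hu : {z | μ z < η} = ⋃ n : ℕ, {z | μ z ≤ η - 1 / (n + 1)} := by
    ext z
    simp only [Set.mem_setOf_eq, Set.mem_iUnion]
    constructor
    · intro hz
      obtain ⟨n, hn⟩ := exists_nat_one_div_lt (sub_pos.mpr hz)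
      exact ⟨n, by linarith⟩
    · rintro ⟨n, hn⟩
      have : (0:ℝ) < 1 / (n + 1) := by positivity
      linarith
  have hmono : Monotone (fun n : ℕ => {z | μ z ≤ η - 1 / (n + 1)}) := by
    intro m n hmn z hz
    simp only [Set.mem_setOf_eq] at hz ⊢
    have h1 : (1:ℝ) / (n + 1) ≤ 1 / (m + 1) := by
      apply one_div_le_one_div_of_le (by positivity)
      have : (m:ℝ) ≤ n := Nat.cast_le.mpr hmn
      linarith
    linarith
  rw [hu, hmono.directed_le.measure_iUnion]
  exact iSup_le h

/-- right continuity of cdf: {μ ≤ η} = ⋂ₙ {μ ≤ η + 1/(n+1)} -/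
lemma limit_cdf (hμ : Measurable μ) {η : ℝ} {c : ENNReal}
    (h : ∀ n : ℕ, c ≤ P {z | μ z ≤ η + 1 / (n + 1)}) :
    c ≤ P {z | μ z ≤ η} := by
  have hu : {z | μ z ≤ η} = ⋂ n : ℕ, {z | μ z ≤ η + 1 / (n + 1)} := by
    ext z
    simp only [Set.mem_setOf_eq, Set.mem_iInter]
    constructor
    · intro hz n
      have : (0:ℝ) < 1 / (n + 1) := by positivity
      linarith
    · intro hz
      by_contra hcon
      push_neg at hcon
      obtain ⟨n, hn⟩ := exists_nat_one_div_lt (sub_pos.mpr hcon)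
      have := hz n
      linarith
  have hanti : Antitone (fun n : ℕ => {z | μ z ≤ η + 1 / (n + 1)}) := by
    intro m n hmn z hz
    simp only [Set.mem_setOf_eq] at hz ⊢
    have h1 : (1:ℝ) / (n + 1) ≤ 1 / (m + 1) := by
      apply one_div_le_one_div_of_le (by positivity)
      have : (m:ℝ) ≤ n := Nat.cast_le.mpr hmn
      linarith
    linarith
  rw [hu, hanti.directed_ge.measure_iInter
    (fun n => (measurableSet_le hμ measurable_const).nullMeasurableSet)
    ⟨0, measure_ne_top _ _⟩]
  exact le_iInf h
lemma minimizer_iff (hμ : Measurable μ) (hint : Integrable (fun z => max (μ z) 0) P)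
    {α : ℝ} (hα : α ∈ Set.Ioo (0:ℝ) 1) (η : ℝ) :
    (∀ η' : ℝ, (1 / α) * (∫ z, max (μ z - η) 0 ∂P) + η
        ≤ (1 / α) * (∫ z, max (μ z - η') 0 ∂P) + η')
      ↔ (P {z | η < μ z} ≤ ENNReal.ofReal α ∧ ENNReal.ofReal α ≤ P {z | η ≤ μ z}) := by
  obtain ⟨hα1, hα2⟩ := hα
  constructor
  · intro hmin
    constructor
    · apply limit_right hμ
      intro n
      set b : ℝ := η + 1 / (n + 1) with hbdef
      have hbη : η < b := by
        have : (0:ℝ) < 1 / (n + 1) := by positivity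
        simp only [hbdef]; linarith
      have key1 := gdiff_lower hμ hint (a := η) (b := b) hbη.le
      have key2 := hmin b
      rw [ENNReal.le_ofReal_iff_toReal_le (measure_ne_top _ _) hα1.le]
      set p := (P {z | b ≤ μ z}).toReal
      set gη := ∫ z, max (μ z - η) 0 ∂P
      set gb := ∫ z, max (μ z - b) 0 ∂P
      have h3 : (1/α) * (gη - gb) ≤ b - η := by linarith
      have h4 := mul_le_mul_of_nonneg_left h3 hα1.le
      rw [← mul_assoc, mul_one_div_cancel (ne_of_gt hα1), one_mul] at h4
      nlinarith
    · apply limit_left hμ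
      intro n
      set a : ℝ := η - 1 / (n + 1) with hadef
      have haη : a < η := by
        have : (0:ℝ) < 1 / (n + 1) := by positivity
        simp only [hadef]; linarith
      have key1 := gdiff_upper hμ hint (a := a) (b := η) haη.le
      have key2 := hmin a
      rw [ENNReal.ofReal_le_iff_le_toReal (measure_ne_top _ _)]
      set p := (P {z | a < μ z}).toReal
      set gη := ∫ z, max (μ z - η) 0 ∂P
      set ga := ∫ z, max (μ z - a) 0 ∂P
      have h3 : η - a ≤ (1/α) * (ga - gη) := by linarith
      have h4 := mul_le_mul_of_nonneg_left h3 hα1.le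
      rw [← mul_assoc, mul_one_div_cancel (ne_of_gt hα1), one_mul] at h4
      nlinarith
  · rintro ⟨hp, hq⟩ η'
    rw [ENNReal.le_ofReal_iff_toReal_le (measure_ne_top _ _) hα1.le] at hp
    rw [ENNReal.ofReal_le_iff_le_toReal (measure_ne_top _ _)] at hq
    rcases le_total η η' with h | h
    · have key := gdiff_upper hμ hint (a := η) (b := η') h
      set p := (P {z | η < μ z}).toReal
      set gη := ∫ z, max (μ z - η) 0 ∂P
      set gη' := ∫ z, max (μ z - η') 0 ∂P
      have h1 : gη - gη' ≤ (η' - η) * α := by nlinarith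
      have h2 : (1/α) * (gη - gη') ≤ (1/α) * ((η' - η) * α) :=
        mul_le_mul_of_nonneg_left h1 (by positivity)
      rw [mul_comm (η' - η) α, ← mul_assoc, one_div_mul_cancel (ne_of_gt hα1), one_mul] at h2
      linarith
    · have key := gdiff_lower hμ hint (a := η') (b := η) h
      set p := (P {z | η ≤ μ z}).toReal
      set gη := ∫ z, max (μ z - η) 0 ∂P
      set gη' := ∫ z, max (μ z - η') 0 ∂P
      have h1 : (η - η') * α ≤ gη' - gη := by nlinarith
      have h2 : (1/α) * ((η - η') * α) ≤ (1/α) * (gη' - gη) :=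
        mul_le_mul_of_nonneg_left h1 (by positivity)
      rw [mul_comm (η - η') α, ← mul_assoc, one_div_mul_cancel (ne_of_gt hα1), one_mul] at h2
      linarith

end CVarAux

/-- The minimizers of the dual CVaR objective are exactly the interval between the
`(1−α)`-quantile and the upper `(1−α)`-quantile. -/
theorem cvar_dual_argmin_eq_quantile_interval
    {Z : Type*} [MeasurableSpace Z] (P : Measure Z) [IsProbabilityMeasure P]
    (μ : Z → ℝ) (hμ : Measurable μ)
    (hnonneg : ∀ᵐ z ∂P, 0 ≤ μ z)
    (hint : Integrable (fun z => max (μ z) 0) P)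
    (α : ℝ) (hα : α ∈ Set.Ioo (0 : ℝ) 1) :
    {η : ℝ | ∀ η' : ℝ,
        (1 / α) * (∫ z, max (μ z - η) 0 ∂P) + η ≤ (1 / α) * (∫ z, max (μ z - η') 0 ∂P) + η'}
      = Set.Icc (sInf {t : ℝ | ENNReal.ofReal (1 - α) ≤ P {z | μ z ≤ t}})
          (sInf {t : ℝ | ENNReal.ofReal (1 - α) < P {z | μ z ≤ t}}) := by
  obtain ⟨hα1, hα2⟩ := hα
  have hα' : α ∈ Set.Ioo (0:ℝ) 1 := ⟨hα1, hα2⟩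
  set A := {t : ℝ | ENNReal.ofReal (1 - α) ≤ P {z | μ z ≤ t}} with hAdef
  set B := {t : ℝ | ENNReal.ofReal (1 - α) < P {z | μ z ≤ t}} with hBdef
  have h1mα : (0:ℝ) < 1 - α := by linarith
  -- B is nonempty
  have hBne : B.Nonempty := by
    have hu : (Set.univ : Set Z) = ⋃ n : ℕ, {z | μ z ≤ n} := by
      ext z
      simp only [Set.mem_univ, Set.mem_iUnion, Set.mem_setOf_eq, true_iff]
      obtain ⟨n, hn⟩ := exists_nat_ge (μ z)
      exact ⟨n, hn⟩
    have hmono : Monotone (fun n : ℕ => {z | μ z ≤ (n:ℝ)}) := by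
      intro m n hmn z hz
      simp only [Set.mem_setOf_eq] at hz ⊢
      exact hz.trans (Nat.cast_le.mpr hmn)
    have h1 : (1 : ENNReal) = ⨆ n : ℕ, P {z | μ z ≤ (n:ℝ)} := by
      rw [← hmono.directed_le.measure_iUnion, ← hu, measure_univ]
    have hlt : ENNReal.ofReal (1 - α) < ⨆ n : ℕ, P {z | μ z ≤ (n:ℝ)} := by
      rw [← h1]
      exact ENNReal.ofReal_lt_one.mpr (by linarith)
    obtain ⟨n, hn⟩ := lt_iSup_iff.mp hlt
    exact ⟨(n:ℝ), hn⟩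
  have hAB : B ⊆ A := by
    intro t ht
    simp only [hAdef, hBdef, Set.mem_setOf_eq] at ht ⊢
    exact le_of_lt ht
  have hAne : A.Nonempty := hBne.mono hAB
  -- 0 is a lower bound of A
  have hlbA : ∀ t ∈ A, (0:ℝ) ≤ t := by
    intro t ht
    by_contra hcon
    push_neg at hcon
    have hnull : P {z | μ z ≤ t} = 0 := by
      have h0 : P {z | ¬ (0 ≤ μ z)} = 0 := MeasureTheory.ae_iff.mp hnonneg
      apply measure_mono_null _ h0
      intro z hz
      simp only [Set.mem_setOf_eq, not_le] at hz ⊢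
      exact lt_of_le_of_lt hz hcon
    rw [hAdef, Set.mem_setOf_eq, hnull] at ht
    have : (0:ENNReal) < ENNReal.ofReal (1 - α) := ENNReal.ofReal_pos.mpr h1mα
    exact absurd (le_antisymm ht zero_le) (ne_of_gt this)
  have hbddA : BddBelow A := ⟨0, hlbA⟩
  have hbddB : BddBelow B := ⟨0, fun t ht => hlbA t (hAB ht)⟩
  -- monotonicity of cdf
  have hcdf_mono : ∀ {s t : ℝ}, s ≤ t → P {z | μ z ≤ s} ≤ P {z | μ z ≤ t} := by
    intro s t hst
    apply measure_mono
    intro z hz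
    exact le_trans hz hst
  -- sInf A ∈ A
  have hqA : sInf A ∈ A := by
    rw [hAdef, Set.mem_setOf_eq]
    apply CVarAux.limit_cdf hμ
    intro n
    have hpos : (0:ℝ) < 1 / (n + 1) := by positivity
    have hlt : sInf A < sInf A + 1 / (n + 1) := by linarith
    obtain ⟨a, haA, ha⟩ := exists_lt_of_csInf_lt hAne hlt
    exact le_trans haA (hcdf_mono ha.le)
  ext η
  simp only [Set.mem_setOf_eq, Set.mem_Icc]
  rw [CVarAux.minimizer_iff hμ hint hα']
  constructor
  · rintro ⟨hp, hq⟩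
    constructor
    · exact csInf_le hbddA ((CVarAux.compl1 hμ hα' η).mp hp)
    · apply le_csInf hBne
      intro t ht
      by_contra hcon
      push_neg at hcon
      have h1 : P {z | μ z ≤ t} ≤ P {z | μ z < η} := by
        apply measure_mono
        intro z hz
        exact lt_of_le_of_lt hz hcon
      have h2 := (CVarAux.compl2 hμ hα' η).mp hq
      rw [hBdef, Set.mem_setOf_eq] at ht
      exact absurd (lt_of_lt_of_le ht (h1.trans h2)) (lt_irrefl _)
  · rintro ⟨h1, h2⟩
    constructor
    · rw [CVarAux.compl1 hμ hα']
      exact le_trans hqA (hcdf_mono h1)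
    · rw [CVarAux.compl2 hμ hα']
      apply CVarAux.limit_lt hμ
      intro n
      have hpos : (0:ℝ) < 1 / (n + 1) := by positivity
      by_contra hcon
      push_neg at hcon
      have hmem : η - 1 / (n + 1) ∈ B := hcon
      have := csInf_le hbddB hmem
      linarith
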